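/- arXiv:math/0401242 — 2 statements merged into one kernel-verified Lean document; each statement's English description precedes it below -/
import Mathlib

section
/- Let A be a unital C*-algebra and I a σ-unital closed two-sided ideal of A. If A has property (P1) (every full element b of A admits x, y ∈ A with x b y = 1), then the quotient A/I also has property (P1). -/
open scoped ENNReal MultiplierAlgebra

/-- An element `b` of a topological ring is *full* if the closure of the two-sided ideal
it generates is the whole ring. -/
def IsFullIn {A : Type*} [NonUnitalNonAssocRing A] [TopologicalSpace A] (b : A) : Prop :=
  closure ((TwoSidedIdeal.span {b} : TwoSidedIdeal A) : Set A) = Set.univ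

/-- Property (P1): every full element `b` admits `x, y` with `x * b * y = 1`. -/
def PropP1 (B : Type*) [Ring B] [TopologicalSpace B] : Prop :=
  ∀ b : B, IsFullIn b → ∃ x y : B, x * b * y = 1

/-- The piecewise-linear function `f_n` : `0` on `[0, 1/(n+1)]`, `1` on `[1/n, ∞)`,
linear in between. -/
noncomputable def fcut (n : ℕ) (t : ℝ) : ℝ := min 1 (max 0 ((n * (n + 1) : ℝ) * t - n))

lemma fcut_nonneg (n : ℕ) (t : ℝ) : 0 ≤ fcut n t :=
  le_min zero_le_one (le_max_left _ _)

lemma fcut_le_one (n : ℕ) (t : ℝ) : fcut n t ≤ 1 := min_le_left _ _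

lemma fcut_continuous (n : ℕ) : Continuous (fcut n) := by
  unfold fcut; fun_prop

/-- Helper: `gcut n t = fcut n t / t` for `t ≥ 0`, continuous everywhere. -/
noncomputable def gcut (n : ℕ) (t : ℝ) : ℝ :=
  max 0 (min ((n * (n + 1) : ℝ) - n / max t ((n : ℝ) + 1)⁻¹) (max t ((n : ℝ) + 1)⁻¹)⁻¹)

lemma gcut_continuous (n : ℕ) : Continuous (gcut n) := by
  have hmax : Continuous fun t : ℝ => max t ((n : ℝ) + 1)⁻¹ :=
    continuous_id.max continuous_const
  have hne : ∀ t : ℝ, max t ((n : ℝ) + 1)⁻¹ ≠ 0 := fun t =>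
    ne_of_gt (lt_of_lt_of_le (by positivity) (le_max_right _ _))
  exact continuous_const.max
    (((continuous_const.sub (continuous_const.div hmax hne)).min (hmax.inv₀ hne)))

private lemma minmax_comm (s : ℝ) : min 1 (max 0 s) = max 0 (min s 1) := by
  rcases le_total s 0 with h | h
  · rw [max_eq_left h, min_eq_right zero_le_one,
      min_eq_left (h.trans zero_le_one), max_eq_left h]
  · rcases le_total s 1 with h1 | h1
    · rw [max_eq_right h, min_eq_right h1, min_eq_left h1, max_eq_right h]
    · rw [max_eq_right h, min_eq_left h1, min_eq_right h1,
        max_eq_right zero_le_one]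

lemma fcut_eq_mul_gcut (n : ℕ) {t : ℝ} (ht : 0 ≤ t) : fcut n t = t * gcut n t := by
  have hc0 : (0 : ℝ) < ((n : ℝ) + 1)⁻¹ := by positivity
  rcases le_or_gt t (((n : ℝ) + 1)⁻¹) with h | h
  · have hmax : max t ((n : ℝ) + 1)⁻¹ = ((n : ℝ) + 1)⁻¹ := max_eq_right h
    have hdiv : (n : ℝ) / ((n : ℝ) + 1)⁻¹ = (n : ℝ) * ((n : ℝ) + 1) := by
      field_simp
    have hg : gcut n t = 0 := by
      rw [gcut, hmax, hdiv, inv_inv, sub_self, max_eq_left]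
      exact min_le_of_left_le le_rfl
    have hs : (n * (n + 1) : ℝ) * t - n ≤ 0 := by
      have h2 := mul_le_mul_of_nonneg_left h (by positivity : (0:ℝ) ≤ (n * (n + 1) : ℝ))
      have h3 : (n * (n + 1) : ℝ) * ((n : ℝ) + 1)⁻¹ = n := by field_simp
      push_cast at h2 h3 ⊢
      nlinarith [h2, h3]
    rw [hg, mul_zero, fcut, max_eq_left hs, min_eq_right zero_le_one]
  · have ht0 : (0 : ℝ) < t := hc0.trans h
    have hmax : max t ((n : ℝ) + 1)⁻¹ = t := max_eq_left h.le
    rw [fcut, gcut, hmax, mul_max_of_nonneg _ _ ht, mul_zero,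
      mul_min_of_nonneg _ _ ht, mul_sub, mul_div_cancel₀ _ ht0.ne',
      mul_inv_cancel₀ ht0.ne', minmax_comm]
    ring_nf

lemma fcut_succ_eq_one (n : ℕ) {t : ℝ} (h : ((n : ℝ) + 1)⁻¹ < t) : fcut (n + 1) t = 1 := by
  have hp : (0 : ℝ) < (n : ℝ) + 1 := by positivity
  have h1 : 1 < t * ((n : ℝ) + 1) := by
    have := (div_lt_iff₀ hp).mp (by rwa [one_div] : 1 / ((n:ℝ)+1) < t)
    linarith
  rw [fcut, min_eq_left]
  refine le_max_of_le_right ?_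
  push_cast
  nlinarith

lemma fcut_succ_bound (n : ℕ) {t : ℝ} (ht : 0 ≤ t) :
    |(1 - fcut (n + 1) t) * t * (1 - fcut (n + 1) t)| ≤ ((n : ℝ) + 1)⁻¹ := by
  have h0 := fcut_nonneg (n + 1) t
  have h1 := fcut_le_one (n + 1) t
  have habs : |(1 - fcut (n + 1) t) * t * (1 - fcut (n + 1) t)|
      = (1 - fcut (n + 1) t) * t * (1 - fcut (n + 1) t) := by
    apply abs_of_nonneg
    have hf : 0 ≤ 1 - fcut (n + 1) t := by linarith
    positivity
  rw [habs]
  rcases le_or_gt t (((n : ℝ) + 1)⁻¹) with h | h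
  · have hf : 0 ≤ 1 - fcut (n + 1) t := by linarith
    have hf1 : 1 - fcut (n + 1) t ≤ 1 := by linarith
    calc (1 - fcut (n + 1) t) * t * (1 - fcut (n + 1) t) ≤ 1 * t * 1 := by
          apply mul_le_mul (mul_le_mul hf1 le_rfl ht zero_le_one) hf1 hf
          positivity
      _ = t := by ring
      _ ≤ ((n : ℝ) + 1)⁻¹ := h
  · rw [fcut_succ_eq_one n h]
    simp only [sub_self, zero_mul, mul_zero]
    positivity

section CStar

variable {A : Type*} [CStarAlgebra A] [PartialOrder A] [StarOrderedRing A]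

lemma cfc_fcut_mem_span (n : ℕ) {c : A} (hc : 0 ≤ c) :
    cfc (fcut n) c ∈ ((TwoSidedIdeal.span {c} : TwoSidedIdeal A) : Set A) := by
  have hsa : IsSelfAdjoint c := .of_nonneg hc
  have h1 : cfc (fcut n) c = cfc (fun t : ℝ => t * gcut n t) c :=
    cfc_congr fun t ht => fcut_eq_mul_gcut n (spectrum_nonneg_of_nonneg hc ht)
  rw [h1, cfc_mul (fun t : ℝ => t) (gcut n) c continuousOn_id
    ((gcut_continuous n).continuousOn), cfc_id' ℝ c]
  exact SetLike.mem_coe.mpr <|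
    (TwoSidedIdeal.span {c}).mul_mem_right _ _
      (TwoSidedIdeal.subset_span (Set.mem_singleton c))

lemma key_bound {c x : A} (hc : 0 ≤ c) (hx : 0 ≤ x) (hxc : x ≤ c) (n : ℕ) :
    ‖(1 - cfc (fcut (n + 1)) c) * x * (1 - cfc (fcut (n + 1)) c)‖ ≤ ((n : ℝ) + 1)⁻¹ := by
  have hsa : IsSelfAdjoint c := .of_nonneg hc
  set q : A := 1 - cfc (fcut (n + 1)) c with hqdef
  have hqsa : IsSelfAdjoint q :=
    (IsSelfAdjoint.one A).sub (cfc_predicate (fcut (n + 1)) c)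
  have h1 : (0 : A) ≤ q * x * q := by
    simpa [hqsa.star_eq] using star_left_conjugate_nonneg hx q
  have h2 : q * x * q ≤ q * c * q := by
    simpa [hqsa.star_eq] using star_left_conjugate_le_conjugate hxc q
  have h3 : ‖q * x * q‖ ≤ ‖q * c * q‖ :=
    CStarAlgebra.norm_le_norm_of_nonneg_of_le h1 h2
  have hcont : ContinuousOn (fun t : ℝ => 1 - fcut (n + 1) t) (spectrum ℝ c) :=
    (continuous_const.sub (fcut_continuous (n + 1))).continuousOn
  have hq' : q = cfc (fun t : ℝ => 1 - fcut (n + 1) t) c := by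
    rw [cfc_sub (fun _ : ℝ => (1 : ℝ)) (fcut (n + 1)) c continuousOn_const
      ((fcut_continuous (n + 1)).continuousOn), cfc_const 1 c, map_one]
  have e1 : cfc (fun t : ℝ => (1 - fcut (n + 1) t) * t) c
      = cfc (fun t : ℝ => 1 - fcut (n + 1) t) c * cfc (fun t : ℝ => t) c :=
    cfc_mul _ _ c hcont continuousOn_id
  have e2 : cfc (fun t : ℝ => (1 - fcut (n + 1) t) * t * (1 - fcut (n + 1) t)) c
      = cfc (fun t : ℝ => (1 - fcut (n + 1) t) * t) c
        * cfc (fun t : ℝ => 1 - fcut (n + 1) t) c :=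
    cfc_mul _ _ c (hcont.mul continuousOn_id) hcont
  have h4 : q * c * q
      = cfc (fun t : ℝ => (1 - fcut (n + 1) t) * t * (1 - fcut (n + 1) t)) c := by
    rw [e2, e1, cfc_id' ℝ c, ← hq']
  have h5 : ‖q * c * q‖ ≤ ((n : ℝ) + 1)⁻¹ := by
    rw [h4]
    refine norm_cfc_le (by positivity) fun t ht => ?_
    have ht0 : 0 ≤ t := spectrum_nonneg_of_nonneg hc ht
    rw [Real.norm_eq_abs]
    exact fcut_succ_bound n ht0
  exact h3.trans h5

lemma mem_closure_span_of_nonneg_le {c x : A} (hc : 0 ≤ c) (hx : 0 ≤ x) (hxc : x ≤ c) :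
    x ∈ closure ((TwoSidedIdeal.span {c} : TwoSidedIdeal A) : Set A) := by
  rw [Metric.mem_closure_iff]
  intro ε hε
  obtain ⟨n, hn⟩ := exists_nat_gt ε⁻¹
  have hnε : ((n : ℝ) + 1)⁻¹ < ε := by
    rw [inv_lt_comm₀ (by positivity) hε]
    linarith
  set p : A := cfc (fcut (n + 1)) c with hpdef
  have hp : p ∈ ((TwoSidedIdeal.span {c} : TwoSidedIdeal A) : Set A) :=
    cfc_fcut_mem_span (n + 1) hc
  refine ⟨p * x + x * p - p * x * p, ?_, ?_⟩
  · exact SetLike.mem_coe.mpr <| sub_mem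
      (add_mem ((TwoSidedIdeal.span {c}).mul_mem_right p x hp)
        ((TwoSidedIdeal.span {c}).mul_mem_left x p hp))
      ((TwoSidedIdeal.span {c}).mul_mem_left (p * x) p hp)
  · have heq : x - (p * x + x * p - p * x * p) = (1 - p) * x * (1 - p) := by
      noncomm_ring
    rw [dist_eq_norm, heq]
    exact lt_of_le_of_lt (key_bound hc hx hxc n) hnε

lemma mem_closure_span_of_star_mul_self_le {c : A} (a : A) (hc : 0 ≤ c)
    (h : star a * a ≤ c) :
    a ∈ closure ((TwoSidedIdeal.span {c} : TwoSidedIdeal A) : Set A) := by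
  rw [Metric.mem_closure_iff]
  intro ε hε
  obtain ⟨n, hn⟩ := exists_nat_gt (ε * ε)⁻¹
  have hnε : ((n : ℝ) + 1)⁻¹ < ε * ε := by
    rw [inv_lt_comm₀ (by positivity) (by positivity)]
    linarith
  set p : A := cfc (fcut (n + 1)) c with hpdef
  have hp : p ∈ ((TwoSidedIdeal.span {c} : TwoSidedIdeal A) : Set A) :=
    cfc_fcut_mem_span (n + 1) hc
  refine ⟨a * p, SetLike.mem_coe.mpr <|
    (TwoSidedIdeal.span {c}).mul_mem_left a p hp, ?_⟩
  have hqsa : IsSelfAdjoint (1 - p) :=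
    (IsSelfAdjoint.one A).sub (cfc_predicate (fcut (n + 1)) c)
  have heq : star (a * (1 - p)) * (a * (1 - p)) = (1 - p) * (star a * a) * (1 - p) := by
    rw [star_mul, hqsa.star_eq]
    noncomm_ring
  have hb : ‖a * (1 - p)‖ * ‖a * (1 - p)‖ ≤ ((n : ℝ) + 1)⁻¹ := by
    rw [← CStarRing.norm_star_mul_self, heq]
    exact key_bound hc (star_mul_self_nonneg a) h n
  have hlt : ‖a * (1 - p)‖ < ε := by
    nlinarith [norm_nonneg (a * (1 - p))]
  rw [dist_eq_norm]
  calc ‖a - a * p‖ = ‖a * (1 - p)‖ := by rw [mul_one_sub]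
    _ < ε := hlt

end CStar

/-- property (P1) passes to quotients by σ-unital closed two-sided ideals
(the quotient `A/I` is modelled by a surjective star homomorphism with kernel `I`). -/
theorem stmt3 {A Q : Type*} [CStarAlgebra A] [PartialOrder A] [StarOrderedRing A]
    [CStarAlgebra Q]
    (I : TwoSidedIdeal A) (hclosed : IsClosed (I : Set A))
    (hσ : ∃ e : A, e ∈ I ∧ 0 ≤ e ∧ closure {x | ∃ y ∈ I, x = e * y * e} = (I : Set A))
    (π : A →⋆ₐ[ℂ] Q) (hsurj : Function.Surjective π)
    (hker : ∀ x : A, π x = 0 ↔ x ∈ I)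
    (hA : PropP1 A) : PropP1 Q := by
  obtain ⟨e, heI, he0, heσ⟩ := hσ
  intro b hb
  obtain ⟨a, rfl⟩ := hsurj b
  have hc : (0 : A) ≤ star a * a + e := add_nonneg (star_mul_self_nonneg a) he0
  set c : A := star a * a + e with hcdef
  set J : Set A := closure ((TwoSidedIdeal.span {c} : TwoSidedIdeal A) : Set A) with hJdef
  have hadd : ∀ {x y : A}, x ∈ J → y ∈ J → x + y ∈ J := fun {x y} hx hy =>
    map_mem_closure₂ continuous_add hx hy fun u hu v hv =>
      SetLike.mem_coe.mpr (add_mem (SetLike.mem_coe.mp hu) (SetLike.mem_coe.mp hv))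
  have hneg : ∀ {x : A}, x ∈ J → -x ∈ J := fun {x} hx =>
    map_mem_closure continuous_neg hx fun u hu =>
      SetLike.mem_coe.mpr (neg_mem (SetLike.mem_coe.mp hu))
  have hmulL : ∀ (x : A) {y : A}, y ∈ J → x * y ∈ J := fun x {y} hy =>
    map_mem_closure (f := fun z : A => x * z) (continuous_const.mul continuous_id) hy fun z hz =>
      SetLike.mem_coe.mpr ((TwoSidedIdeal.span {c}).mul_mem_left x z (SetLike.mem_coe.mp hz))
  have hmulR : ∀ {x : A} (y : A), x ∈ J → x * y ∈ J := fun {x} y hx =>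
    map_mem_closure (f := fun z : A => z * y) (continuous_id.mul continuous_const) hx fun z hz =>
      SetLike.mem_coe.mpr ((TwoSidedIdeal.span {c}).mul_mem_right z y (SetLike.mem_coe.mp hz))
  have hzero : (0 : A) ∈ J := subset_closure (SetLike.mem_coe.mpr (zero_mem _))
  have haJ : a ∈ J :=
    mem_closure_span_of_star_mul_self_le a hc (le_add_of_nonneg_right he0)
  have heJ : e ∈ J :=
    mem_closure_span_of_nonneg_le hc he0 (le_add_of_nonneg_left (star_mul_self_nonneg a))
  have hIJ : (I : Set A) ⊆ J := by
    rw [← heσ]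
    refine closure_minimal ?_ isClosed_closure
    rintro x ⟨y, hy, rfl⟩
    rw [mul_assoc]
    exact hmulR (y * e) heJ
  have πcont : Continuous π :=
    AddMonoidHomClass.continuous_of_bound π 1 fun u => by
      simpa [one_mul] using NonUnitalStarAlgHom.norm_apply_le π u
  have hKsub : ((TwoSidedIdeal.span {π a} : TwoSidedIdeal Q) : Set Q) ⊆ π '' J := by
    intro w hw
    let K : TwoSidedIdeal Q := TwoSidedIdeal.mk' (π '' J)
      ⟨0, hzero, map_zero π⟩
      (fun {x y} hx hy => by
        obtain ⟨x', hx', rfl⟩ := hx; obtain ⟨y', hy', rfl⟩ := hy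
        exact ⟨x' + y', hadd hx' hy', map_add π x' y'⟩)
      (fun {x} hx => by
        obtain ⟨x', hx', rfl⟩ := hx
        exact ⟨-x', hneg hx', map_neg π x'⟩)
      (fun {x y} hy => by
        obtain ⟨y', hy', rfl⟩ := hy
        obtain ⟨x', rfl⟩ := hsurj x
        exact ⟨x' * y', hmulL x' hy', map_mul π x' y'⟩)
      (fun {x y} hx => by
        obtain ⟨x', hx', rfl⟩ := hx
        obtain ⟨y', rfl⟩ := hsurj y
        exact ⟨x' * y', hmulR y' hx', map_mul π x' y'⟩)
    have hbK : π a ∈ K := by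
      exact (TwoSidedIdeal.mem_mk' _ _ _ _ _ _ _).mpr ⟨a, haJ, rfl⟩
    have hwK := TwoSidedIdeal.mem_span_iff.mp (SetLike.mem_coe.mp hw) K
      (Set.singleton_subset_iff.mpr hbK)
    exact (TwoSidedIdeal.mem_mk' _ _ _ _ _ _ _).mp hwK
  have hKfull : closure (π '' J) = Set.univ :=
    Set.eq_univ_of_univ_subset (hb ▸ closure_mono hKsub)
  let πL : A →L[ℂ] Q := { toLinearMap := π.toAlgHom.toLinearMap, cont := πcont }
  have hsurjL : Function.Surjective πL := hsurj
  have hJuniv : J = Set.univ := by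
    refine Set.eq_univ_of_forall fun z => ?_
    have h1 : closure (πL ⁻¹' (π '' J)) = πL ⁻¹' closure (π '' J) :=
      πL.closure_preimage hsurjL (π '' J)
    have hz : z ∈ closure (πL ⁻¹' (π '' J)) := by
      rw [h1, hKfull]
      exact Set.mem_preimage.mpr (Set.mem_univ _)
    have hsub : πL ⁻¹' (π '' J) ⊆ J := by
      rintro u hu
      obtain ⟨j, hj, hju⟩ := hu
      have hdiff : u - j ∈ I := (hker (u - j)).mp (by
        have hju' : π j = π u := hju
        rw [map_sub, hju', sub_self])
      have h2 : u = (u - j) + j := by abel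
      rw [h2]
      exact hadd (hIJ hdiff) hj
    exact closure_minimal hsub isClosed_closure hz
  have hfull : IsFullIn c := hJuniv
  obtain ⟨x, y, hxy⟩ := hA c hfull
  have hπc : π c = star (π a) * π a := by
    rw [hcdef, map_add, map_mul, map_star, (hker e).mpr heI, add_zero]
  have hmain := congrArg π hxy
  rw [map_mul, map_mul, map_one, hπc] at hmain
  exact ⟨π x * star (π a), π y, by
    rw [mul_assoc (π x) (star (π a)) (π a)]
    exact hmain⟩
end

section
/- Let q_∞(A) = l^∞(A)/c₀(A) where A is a unital purely infinite simple C*-algebra. Then q_∞(A) has property (P1) and property (P2): every full element b of q_∞(A) admits x with x*·b·x = 1 (when b ≥ 0), and q_∞(A) contains two isometries with mutually orthogonal range projections. -/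
open scoped ENNReal MultiplierAlgebra

/-- A unital C*-algebra is purely infinite and simple iff it is noncommutative and every
nonzero element can be multiplied to the identity (Cuntz's characterization). -/
def PurelyInfiniteSimple (A : Type*) [CStarAlgebra A] : Prop :=
  (∀ a : A, a ≠ 0 → ∃ x y : A, x * a * y = 1) ∧ ¬ (∀ a b : A, a * b = b * a)

section FcutLemmas

lemma fcut_eq_one {n : ℕ} (hn : 0 < n) {t : ℝ} (ht : 1 / n ≤ t) : fcut n t = 1 := by
  have hn' : (0:ℝ) < n := by exact_mod_cast hn
  have h1 : (1:ℝ) ≤ (n * (n + 1) : ℝ) * t - n := by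
    have : (n * (n + 1) : ℝ) * (1 / n) ≤ (n * (n + 1) : ℝ) * t := by
      apply mul_le_mul_of_nonneg_left ht (by positivity)
    have h2 : (n * (n + 1) : ℝ) * (1 / n) = n + 1 := by field_simp
    rw [h2] at this; linarith
  rw [fcut, max_eq_right (by linarith), min_eq_left h1]

lemma fcut_pos_imp {n : ℕ} {t : ℝ} (h : fcut n t ≠ 0) : 1 / (n + 1 : ℝ) < t := by
  have hn1 : (0:ℝ) < (n:ℝ) + 1 := by positivity
  by_contra hc
  push_neg at hc
  apply h
  have h2 : (n * (n + 1) : ℝ) * t - n ≤ 0 := by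
    have : (n * (n + 1) : ℝ) * t ≤ (n * (n + 1) : ℝ) * (1 / (n + 1 : ℝ)) := by
      apply mul_le_mul_of_nonneg_left hc (by positivity)
    have h3 : (n * (n + 1) : ℝ) * (1 / (n + 1 : ℝ)) = n := by field_simp
    rw [h3] at this; linarith
  rw [fcut, max_eq_left h2, min_eq_right zero_le_one]


end FcutLemmas

section Aux

open ComplexStarModule

variable {B : Type*} [CStarAlgebra B] [PartialOrder B] [StarOrderedRing B] [Nontrivial B]

lemma claimA (hC : ∀ c : B, c ≠ 0 → ∃ x y : B, x * c * y = 1)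
    {a : B} (ha : 0 ≤ a) (h0 : a ≠ 0) : ∃ z : B, star z * a * z = 1 := by
  have hsa : IsSelfAdjoint a := IsSelfAdjoint.of_nonneg ha
  obtain ⟨x, y, hxy⟩ := hC a h0
  have hx0 : x ≠ 0 := by
    rintro rfl
    simp only [zero_mul] at hxy
    exact zero_ne_one hxy
  have hxn : ‖x‖ ≠ 0 := norm_ne_zero_iff.mpr hx0
  obtain ⟨x₁, y₁, hxy1, hx1norm⟩ : ∃ x₁ y₁ : B, x₁ * a * y₁ = 1 ∧ ‖x₁‖ = 1 := by
    refine ⟨‖x‖⁻¹ • x, ‖x‖ • y, ?_, ?_⟩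
    · rw [smul_mul_assoc, smul_mul_assoc, mul_smul_comm, smul_smul,
        inv_mul_cancel₀ hxn, one_smul, hxy]
    · rw [norm_smul, norm_inv, norm_norm, inv_mul_cancel₀ hxn]
  have h1 : star x₁ * x₁ ≤ (1 : B) := by
    have := IsSelfAdjoint.le_algebraMap_norm_self (a := star x₁ * x₁) (IsSelfAdjoint.star_mul_self x₁)
    rwa [CStarRing.norm_star_mul_self, hx1norm, one_mul, map_one] at this
  have h2 : a * (star x₁ * x₁) * a ≤ a * a := by
    have := star_left_conjugate_le_conjugate h1 a
    rwa [hsa.star_eq, mul_one] at this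
  have h3 : star y₁ * (a * (star x₁ * x₁) * a) * y₁ = 1 := by
    have := congrArg (fun t => star t * t) hxy1
    simpa only [star_mul, star_one, hsa.star_eq, mul_assoc, one_mul] using this
  -- a * a ≤ ‖a‖ • a
  have h5 : a * a ≤ ‖a‖ • a := by
    rw [← sub_nonneg]
    have key : (0 : B) ≤ cfc (fun t : ℝ => ‖a‖ * t - t * t) a := by
      apply cfc_nonneg
      intro t ht
      have ht0 : 0 ≤ t := spectrum_nonneg_of_nonneg ha ht
      have ht1 : t ≤ ‖a‖ := (Real.le_norm_self t).trans (spectrum.norm_le_norm_of_mem ht)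
      nlinarith
    have e1 : cfc (fun t : ℝ => ‖a‖ * t - t * t) a = ‖a‖ • a - a * a := by
      rw [cfc_sub _ _ a (by fun_prop) (by fun_prop)]
      congr 1
      · exact cfc_const_mul_id ‖a‖ a hsa
      · rw [cfc_mul _ _ a (by fun_prop) (by fun_prop), cfc_id' ℝ a hsa]
    rwa [e1] at key
  have h6 : star y₁ * (a * a) * y₁ ≤ ‖a‖ • (star y₁ * a * y₁) := by
    have := star_left_conjugate_le_conjugate h5 y₁
    rwa [mul_smul_comm, smul_mul_assoc] at this
  set c : B := star y₁ * a * y₁ with hc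
  have h7 : (1 : B) ≤ ‖a‖ • c := by
    calc (1 : B) = star y₁ * (a * (star x₁ * x₁) * a) * y₁ := h3.symm
      _ ≤ star y₁ * (a * a) * y₁ := star_left_conjugate_le_conjugate h2 y₁
      _ ≤ ‖a‖ • c := h6
  have hna : (0:ℝ) < ‖a‖ := norm_pos_iff.mpr h0
  have h8 : algebraMap ℝ B ‖a‖⁻¹ ≤ c := by
    have h := smul_le_smul_of_nonneg_left h7 (inv_nonneg.mpr hna.le)
    rw [smul_smul, inv_mul_cancel₀ hna.ne', one_smul] at h
    rw [Algebra.algebraMap_eq_smul_one]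
    exact h
  have hc_sa : IsSelfAdjoint c := by
    rw [hc]
    simp only [IsSelfAdjoint, star_mul, star_star, hsa.star_eq, mul_assoc]
  have h9 : ∀ t ∈ spectrum ℝ c, ‖a‖⁻¹ ≤ t :=
    (algebraMap_le_iff_le_spectrum hc_sa).mp h8
  set f : ℝ → ℝ := fun t => (Real.sqrt t)⁻¹ with hf
  have hfc : ContinuousOn f (spectrum ℝ c) := by
    apply ContinuousOn.inv₀ (Real.continuous_sqrt.continuousOn)
    intro t ht
    have := lt_of_lt_of_le (inv_pos.mpr hna) (h9 t ht)
    exact (Real.sqrt_pos.mpr this).ne'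
  have hw_sa : IsSelfAdjoint (cfc f c) := cfc_predicate f c
  refine ⟨y₁ * cfc f c, ?_⟩
  have e2 : star (y₁ * cfc f c) * a * (y₁ * cfc f c) = cfc f c * c * cfc f c := by
    rw [star_mul, hw_sa.star_eq, hc]
    simp only [mul_assoc]
  rw [e2]
  nth_rewrite 2 [← cfc_id' ℝ c hc_sa]
  rw [← cfc_mul f _ c hfc (by fun_prop), ← cfc_mul _ f c (by exact hfc.mul continuousOn_id) hfc]
  have heq : (spectrum ℝ c).EqOn (fun t => f t * t * f t) (fun _ => (1:ℝ)) := by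
    intro t ht
    have htp : 0 < t := lt_of_lt_of_le (inv_pos.mpr hna) (h9 t ht)
    have hst : Real.sqrt t ≠ 0 := (Real.sqrt_pos.mpr htp).ne'
    simp only [hf]
    nth_rewrite 2 [← Real.mul_self_sqrt htp.le]
    field_simp
  rw [cfc_congr heq, cfc_const 1 c hc_sa, map_one]


lemma claimB (hC : ∀ c : B, c ≠ 0 → ∃ x y : B, x * c * y = 1)
    {a : B} (ha : 0 ≤ a) {m : ℕ} (hm : 0 < m) (hn : 1 / (m:ℝ) ≤ ‖a‖) :
    ∃ z : B, star z * a * z = 1 ∧ ‖z‖ ≤ Real.sqrt (m + 1) := by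
  have hsa : IsSelfAdjoint a := IsSelfAdjoint.of_nonneg ha
  have hmr : (0:ℝ) < m := by exact_mod_cast hm
  have hδ : (0:ℝ) < 1 / ((m:ℝ) + 1) := by positivity
  set δ : ℝ := 1 / ((m:ℝ) + 1) with hδdef
  set k : ℝ → ℝ := fcut m with hk
  have hk_cont : Continuous k := fcut_continuous m
  set g : ℝ → ℝ := fun t => Real.sqrt (k t) with hg
  have hg_cont : Continuous g := Real.continuous_sqrt.comp hk_cont
  set r : ℝ → ℝ := fun t => (Real.sqrt (max t δ))⁻¹ with hr
  have hmax_pos : ∀ t : ℝ, 0 < max t δ := fun t => lt_max_of_lt_right hδ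
  have hr_cont : Continuous r := by
    apply Continuous.inv₀ (Real.continuous_sqrt.comp (continuous_id.max continuous_const))
    intro t
    exact (Real.sqrt_pos.mpr (hmax_pos t)).ne'
  -- `cfc k a` is nonzero and nonneg
  have hkb_nonneg : 0 ≤ cfc k a := cfc_nonneg (fun t _ => fcut_nonneg m t)
  have hkb_ne : cfc k a ≠ 0 := by
    intro h
    have h1 : (1:ℝ) ∈ spectrum ℝ (cfc k a) := by
      rw [cfc_map_spectrum (ha := hsa) (hf := hk_cont.continuousOn)]
      exact ⟨‖a‖, CStarAlgebra.norm_mem_spectrum_of_nonneg ha, fcut_eq_one hm hn⟩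
    rw [h] at h1
    simp [spectrum.zero_eq] at h1
  obtain ⟨z₁, hz₁⟩ := claimA hC hkb_nonneg hkb_ne
  set w : B := cfc g a * z₁ with hw
  have hg_sa : IsSelfAdjoint (cfc g a) := cfc_predicate g a
  have hgg : cfc g a * cfc g a = cfc k a := by
    rw [← cfc_mul g g a hg_cont.continuousOn hg_cont.continuousOn]
    exact cfc_congr fun t _ => Real.mul_self_sqrt (fcut_nonneg m t)
  have hw_isom : star w * w = 1 := by
    rw [hw, star_mul, hg_sa.star_eq, mul_assoc, ← mul_assoc (cfc g a), hgg, ← mul_assoc]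
    exact hz₁
  have hw_norm : ‖w‖ = 1 := by
    have h1 : ‖w‖ * ‖w‖ = 1 := by
      rw [← CStarRing.norm_star_mul_self, hw_isom, norm_one]
    have h2 := norm_nonneg w
    rcases mul_self_eq_one_iff.mp h1 with h | h
    · exact h
    · linarith
  refine ⟨cfc r a * w, ?_, ?_⟩
  · have hr_sa : IsSelfAdjoint (cfc r a) := cfc_predicate r a
    have key : cfc (fun t => r t * t * r t) a = cfc r a * a * cfc r a := by
      rw [cfc_mul (fun t => r t * t) r a
          (hr_cont.continuousOn.mul continuousOn_id) hr_cont.continuousOn,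
        cfc_mul r (fun t => t) a hr_cont.continuousOn continuousOn_id,
        cfc_id' ℝ a hsa]
    have key2 : cfc g a * cfc (fun t => r t * t * r t) a * cfc g a = cfc k a := by
      rw [← cfc_mul g (fun t => r t * t * r t) a hg_cont.continuousOn
          ((hr_cont.continuousOn.mul continuousOn_id).mul hr_cont.continuousOn),
        ← cfc_mul (fun t => g t * (r t * t * r t)) g a
          (hg_cont.continuousOn.mul
            ((hr_cont.continuousOn.mul continuousOn_id).mul hr_cont.continuousOn))
          hg_cont.continuousOn]
      apply cfc_congr
      intro t ht
      have ht0 : 0 ≤ t := spectrum_nonneg_of_nonneg ha ht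
      by_cases hkt : k t = 0
      · simp [hg, hkt, Real.sqrt_zero, hkt]
      · have htδ : δ < t := fcut_pos_imp hkt
        have hmax : max t δ = t := max_eq_left htδ.le
        have htpos : 0 < t := lt_trans hδ htδ
        have hrt : r t * t * r t = 1 := by
          simp only [hr, hmax]
          nth_rewrite 2 [← Real.mul_self_sqrt htpos.le]
          have : Real.sqrt t ≠ 0 := (Real.sqrt_pos.mpr htpos).ne'
          field_simp
        simp only [hrt, mul_one]
        exact Real.mul_self_sqrt (fcut_nonneg m t)
    calc star (cfc r a * w) * a * (cfc r a * w)
        = star w * (cfc r a * a * cfc r a) * w := by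
          rw [star_mul, hr_sa.star_eq]; simp only [mul_assoc]
      _ = star w * cfc (fun t => r t * t * r t) a * w := by rw [key]
      _ = star z₁ * (cfc g a * cfc (fun t => r t * t * r t) a * cfc g a) * z₁ := by
          rw [hw, star_mul, hg_sa.star_eq]; simp only [mul_assoc]
      _ = star z₁ * cfc k a * z₁ := by rw [key2]
      _ = 1 := hz₁
  · calc ‖cfc r a * w‖ ≤ ‖cfc r a‖ * ‖w‖ := norm_mul_le _ _
      _ = ‖cfc r a‖ := by rw [hw_norm, mul_one]
      _ ≤ Real.sqrt (m + 1) := by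
          apply norm_cfc_le (Real.sqrt_nonneg _)
          intro t ht
          rw [Real.norm_eq_abs, abs_of_nonneg (by positivity)]
          have h1 : Real.sqrt δ ≤ Real.sqrt (max t δ) :=
            Real.sqrt_le_sqrt (le_max_right _ _)
          have h2 : (Real.sqrt (max t δ))⁻¹ ≤ (Real.sqrt δ)⁻¹ := by
            apply inv_anti₀ (Real.sqrt_pos.mpr hδ) h1
          apply h2.trans
          rw [← Real.sqrt_inv]
          apply le_of_eq
          congr 1
          rw [hδdef]
          field_simp

lemma claimC (hC : ∀ c : B, c ≠ 0 → ∃ x y : B, x * c * y = 1)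
    (hnc : ¬ ∀ a b : B, a * b = b * a) :
    ∃ v₁ v₂ : B, star v₁ * v₁ = 1 ∧ star v₂ * v₂ = 1 ∧
      (v₁ * star v₁) * (v₂ * star v₂) = 0 := by
  obtain ⟨s, hs_sa, c, hsc⟩ : ∃ s : B, IsSelfAdjoint s ∧ ∃ c : B, s * c ≠ c * s := by
    by_contra h
    push_neg at h
    refine hnc fun a b => ?_
    conv_lhs => rw [← realPart_add_I_smul_imaginaryPart a]
    conv_rhs => rw [← realPart_add_I_smul_imaginaryPart a]
    rw [add_mul, mul_add, smul_mul_assoc, mul_smul_comm,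
      h _ (ℜ a).property b, h _ (ℑ a).property b]
  obtain ⟨t₁, ht₁, t₂, ht₂, hne⟩ :
      ∃ t₁ ∈ spectrum ℝ s, ∃ t₂ ∈ spectrum ℝ s, t₁ ≠ t₂ := by
    by_contra h
    push_neg at h
    obtain ⟨t₀, ht₀⟩ := ContinuousFunctionalCalculus.spectrum_nonempty (R := ℝ) s hs_sa
    have hs_eq : s = algebraMap ℝ B t₀ := by
      conv_lhs => rw [← cfc_id ℝ s hs_sa]
      rw [← cfc_const t₀ s hs_sa]
      exact cfc_congr fun t ht => h t ht t₀ ht₀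
    exact hsc (by rw [hs_eq]; exact Algebra.commutes t₀ c)
  set δ : ℝ := |t₂ - t₁| / 3 with hδdef
  have hδ : 0 < δ := by
    have : t₂ - t₁ ≠ 0 := sub_ne_zero.mpr hne.symm
    have := abs_pos.mpr this
    positivity
  set f : ℝ → ℝ := fun t => max 0 (1 - |t - t₁| / δ) with hfdef
  set g : ℝ → ℝ := fun t => max 0 (1 - |t - t₂| / δ) with hgdef
  have hf_cont : Continuous f :=
    continuous_const.max (continuous_const.sub
      (((continuous_id.sub continuous_const).abs).div_const δ))
  have hg_cont : Continuous g :=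
    continuous_const.max (continuous_const.sub
      (((continuous_id.sub continuous_const).abs).div_const δ))
  have hf_nonneg : ∀ t, 0 ≤ f t := fun t => le_max_left _ _
  have hg_nonneg : ∀ t, 0 ≤ g t := fun t => le_max_left _ _
  have hf_one : f t₁ = 1 := by simp [hfdef]
  have hg_one : g t₂ = 1 := by simp [hgdef]
  have hfg : ∀ t, f t * g t = 0 := by
    intro t
    by_cases hf0 : f t = 0
    · rw [hf0, zero_mul]
    · have h1 : |t - t₁| < δ := by
        rcases max_cases (0:ℝ) (1 - |t - t₁| / δ) with ⟨he, hle⟩ | ⟨he, hlt⟩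
        · exact absurd (hfdef ▸ he) hf0
        · have : |t - t₁| / δ < 1 := by linarith
          calc |t - t₁| = |t - t₁| / δ * δ := by field_simp
            _ < 1 * δ := by apply mul_lt_mul_of_pos_right this hδ
            _ = δ := one_mul δ
      have h2 : δ ≤ |t - t₂| := by
        have h3 : |t₂ - t₁| ≤ |t - t₁| + |t - t₂| := by
          calc |t₂ - t₁| = |(t - t₁) - (t - t₂)| := by ring_nf
            _ ≤ |t - t₁| + |t - t₂| := abs_sub _ _
        rw [hδdef] at h1 ⊢
        linarith
      have hg0 : g t = 0 := by
        rw [hgdef]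
        apply max_eq_left
        rw [sub_nonpos, le_div_iff₀ hδ, one_mul]
        exact h2
      rw [hg0, mul_zero]
  -- positive nonzero elements
  have ha'_nonneg : 0 ≤ cfc f s := cfc_nonneg fun t _ => hf_nonneg t
  have hb'_nonneg : 0 ≤ cfc g s := cfc_nonneg fun t _ => hg_nonneg t
  have ha'_ne : cfc f s ≠ 0 := by
    intro h
    have h1 : (1:ℝ) ∈ spectrum ℝ (cfc f s) := by
      rw [cfc_map_spectrum (ha := hs_sa) (hf := hf_cont.continuousOn)]
      exact ⟨t₁, ht₁, hf_one⟩
    rw [h] at h1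
    simp [spectrum.zero_eq] at h1
  have hb'_ne : cfc g s ≠ 0 := by
    intro h
    have h1 : (1:ℝ) ∈ spectrum ℝ (cfc g s) := by
      rw [cfc_map_spectrum (ha := hs_sa) (hf := hg_cont.continuousOn)]
      exact ⟨t₂, ht₂, hg_one⟩
    rw [h] at h1
    simp [spectrum.zero_eq] at h1
  obtain ⟨z₁, hz₁⟩ := claimA hC ha'_nonneg ha'_ne
  obtain ⟨z₂, hz₂⟩ := claimA hC hb'_nonneg hb'_ne
  set sf : ℝ → ℝ := fun t => Real.sqrt (f t) with hsfdef
  set sg : ℝ → ℝ := fun t => Real.sqrt (g t) with hsgdef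
  have hsf_cont : Continuous sf := Real.continuous_sqrt.comp hf_cont
  have hsg_cont : Continuous sg := Real.continuous_sqrt.comp hg_cont
  have hsf_sa : IsSelfAdjoint (cfc sf s) := cfc_predicate sf s
  have hsg_sa : IsSelfAdjoint (cfc sg s) := cfc_predicate sg s
  have hsf_sq : cfc sf s * cfc sf s = cfc f s := by
    rw [← cfc_mul sf sf s hsf_cont.continuousOn hsf_cont.continuousOn]
    exact cfc_congr fun t _ => Real.mul_self_sqrt (hf_nonneg t)
  have hsg_sq : cfc sg s * cfc sg s = cfc g s := by
    rw [← cfc_mul sg sg s hsg_cont.continuousOn hsg_cont.continuousOn]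
    exact cfc_congr fun t _ => Real.mul_self_sqrt (hg_nonneg t)
  have horth : cfc sf s * cfc sg s = 0 := by
    rw [← cfc_mul sf sg s hsf_cont.continuousOn hsg_cont.continuousOn]
    have : (spectrum ℝ s).EqOn (fun t => sf t * sg t) (fun _ => (0:ℝ)) := by
      intro t _
      simp only [hsfdef, hsgdef]
      rw [← Real.sqrt_mul (hf_nonneg t), hfg t, Real.sqrt_zero]
    rw [cfc_congr this]
    exact cfc_const_zero ℝ s
  refine ⟨cfc sf s * z₁, cfc sg s * z₂, ?_, ?_, ?_⟩
  · rw [star_mul, hsf_sa.star_eq, mul_assoc, ← mul_assoc (cfc sf s), hsf_sq, ← mul_assoc]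
    exact hz₁
  · rw [star_mul, hsg_sa.star_eq, mul_assoc, ← mul_assoc (cfc sg s), hsg_sq, ← mul_assoc]
    exact hz₂
  · have hmid : ∀ X : B, cfc sf s * (cfc sg s * X) = 0 := fun X => by
      rw [← mul_assoc, horth, zero_mul]
    simp only [star_mul, hsf_sa.star_eq, hsg_sa.star_eq, mul_assoc]
    rw [hmid]
    simp only [mul_zero]
end Aux

section Main
set_option maxHeartbeats 1000000

open Filter

/-- `q_∞(A) = l^∞(A)/c₀(A)` for `A` unital purely infinite simple
(the quotient modelled by a surjective star homomorphism `π` with kernel `c₀(A)`)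
has properties (P1) and (P2). -/
theorem stmt18 {A : Type} [CStarAlgebra A] [Nontrivial A] (hA : PurelyInfiniteSimple A)
    {Q : Type} [CStarAlgebra Q] [PartialOrder Q] [StarOrderedRing Q]
    (π : lp (fun _ : ℕ => A) ∞ →⋆ₐ[ℂ] Q) (hsurj : Function.Surjective π)
    (hker : ∀ a : lp (fun _ : ℕ => A) ∞,
      π a = 0 ↔ Filter.Tendsto (fun n => ‖(a : ∀ _ : ℕ, A) n‖) Filter.atTop (nhds 0)) :
    (∀ b : Q, 0 ≤ b → IsFullIn b → ∃ x : Q, star x * b * x = 1) ∧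
    (∃ v₁ v₂ : Q, star v₁ * v₁ = 1 ∧ star v₂ * v₂ = 1 ∧
      (v₁ * star v₁) * (v₂ * star v₂) = 0) := by
  letI : PartialOrder A := CStarAlgebra.spectralOrder A
  letI : StarOrderedRing A := CStarAlgebra.spectralOrderedRing A
  set L := lp (fun _ : ℕ => A) ∞ with hL
  -- the constant embedding
  let lconst : A → L := fun x =>
    ⟨fun _ => x, memℓp_infty ⟨‖x‖, by rintro - ⟨i, rfl⟩; exact le_rfl⟩⟩
  have lconst_mul : ∀ x y : A, lconst (x * y) = lconst x * lconst y := fun x y =>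
    lp.ext (by rw [lp.infty_coeFn_mul]; rfl)
  have lconst_star : ∀ x : A, lconst (star x) = star (lconst x) := fun x =>
    lp.ext (funext fun n => by rw [lp.star_apply])
  have lconst_one : lconst (1 : A) = 1 := lp.ext rfl
  have lconst_zero : lconst (0 : A) = 0 := lp.ext (by rw [lp.coeFn_zero]; rfl)
  constructor
  · -- property (P1)
    intro b hb hfull
    -- find a coordinatewise-nonneg lift of `b`
    have hliftkey : ∀ q : Q, q ∈ AddSubmonoid.closure (Set.range fun s : Q => star s * s) →
        ∃ u : L, π u = q ∧ ∀ n : ℕ, 0 ≤ (u : ∀ _ : ℕ, A) n := by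
      intro q hq
      induction hq using AddSubmonoid.closure_induction with
      | mem q hq =>
        obtain ⟨sq, rfl⟩ := hq
        obtain ⟨v, rfl⟩ := hsurj sq
        refine ⟨star v * v, by rw [map_mul, map_star], fun n => ?_⟩
        have h1 : ((star v * v : L) : ∀ _ : ℕ, A) n = star ((v : ∀ _ : ℕ, A) n) * (v : ∀ _ : ℕ, A) n := by
          rw [congrFun (lp.infty_coeFn_mul (star v) v) n]
          simp [lp.star_apply]
        rw [h1]
        exact star_mul_self_nonneg _
      | zero => exact ⟨0, map_zero π, fun n => by rw [lp.coeFn_zero]; exact le_rfl⟩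
      | add x y hx hy ihx ihy =>
        obtain ⟨ux, hux, hpx⟩ := ihx
        obtain ⟨uy, huy, hpy⟩ := ihy
        refine ⟨ux + uy, by rw [map_add, hux, huy], fun n => ?_⟩
        rw [congrFun (lp.coeFn_add ux uy) n]
        exact add_nonneg (hpx n) (hpy n)
    obtain ⟨u, hu, hupos⟩ := hliftkey b (StarOrderedRing.nonneg_iff.mp hb)
    -- the norms of the coordinates of `u` are eventually bounded below
    have hev : ∃ ε : ℝ, 0 < ε ∧ ∃ N : ℕ, ∀ n, N ≤ n → ε ≤ ‖(u : ∀ _ : ℕ, A) n‖ := by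
      by_contra hcon
      push_neg at hcon
      have hfreq : ∀ j : ℕ, ∃ᶠ n in atTop, ‖(u : ∀ _ : ℕ, A) n‖ < 1 / ((j:ℝ) + 1) := by
        intro j
        rw [Filter.frequently_atTop]
        intro N
        obtain ⟨n, hn, hn'⟩ := hcon (1 / ((j:ℝ) + 1)) (by positivity) N
        exact ⟨n, hn, hn'⟩
      obtain ⟨φ, hφmono, hφ⟩ := Filter.extraction_forall_of_frequently hfreq
      have htend : Tendsto (fun j => ‖(u : ∀ _ : ℕ, A) (φ j)‖) atTop (nhds 0) :=
        squeeze_zero (fun j => norm_nonneg _) (fun j => (hφ j).le)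
          tendsto_one_div_add_atTop_nhds_zero_nat
      -- the set of elements of `Q` with a lift vanishing along `φ`
      set C : Set Q := {q | ∃ w : L, π w = q ∧
        Tendsto (fun j => ‖(w : ∀ _ : ℕ, A) (φ j)‖) atTop (nhds 0)} with hC
      have hmul_left : ∀ {x y : Q}, y ∈ C → x * y ∈ C := by
        rintro x y ⟨w, rfl, hw⟩
        obtain ⟨v, rfl⟩ := hsurj x
        refine ⟨v * w, map_mul π v w, ?_⟩
        apply squeeze_zero (fun j => norm_nonneg _) (g := fun j => ‖v‖ * ‖(w : ∀ _ : ℕ, A) (φ j)‖)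
        · intro j
          rw [congrFun (lp.infty_coeFn_mul v w) (φ j)]
          exact (norm_mul_le _ _).trans
            (mul_le_mul_of_nonneg_right (lp.norm_apply_le_norm ENNReal.top_ne_zero v (φ j))
              (norm_nonneg _))
        · simpa using hw.const_mul ‖v‖
      have hmul_right : ∀ {x y : Q}, x ∈ C → x * y ∈ C := by
        rintro x y ⟨w, rfl, hw⟩
        obtain ⟨v, rfl⟩ := hsurj y
        refine ⟨w * v, map_mul π w v, ?_⟩
        apply squeeze_zero (fun j => norm_nonneg _) (g := fun j => ‖(w : ∀ _ : ℕ, A) (φ j)‖ * ‖v‖)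
        · intro j
          rw [congrFun (lp.infty_coeFn_mul w v) (φ j)]
          exact (norm_mul_le _ _).trans
            (mul_le_mul_of_nonneg_left (lp.norm_apply_le_norm ENNReal.top_ne_zero v (φ j))
              (norm_nonneg _))
        · simpa using hw.mul_const ‖v‖
      have hzero : (0 : Q) ∈ C := by
        refine ⟨0, map_zero π, ?_⟩
        have he : (fun j => ‖((0 : L) : ∀ _ : ℕ, A) (φ j)‖) = fun _ => (0:ℝ) :=
          funext fun j => by rw [lp.coeFn_zero]; exact norm_zero
        rw [he]
        exact tendsto_const_nhds
      have hadd : ∀ {x y : Q}, x ∈ C → y ∈ C → x + y ∈ C := by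
        rintro x y ⟨w, rfl, hw⟩ ⟨w', rfl, hw'⟩
        refine ⟨w + w', map_add π w w', ?_⟩
        apply squeeze_zero (fun j => norm_nonneg _)
          (g := fun j => ‖(w : ∀ _ : ℕ, A) (φ j)‖ + ‖(w' : ∀ _ : ℕ, A) (φ j)‖)
        · intro j
          rw [congrFun (lp.coeFn_add w w') (φ j)]
          exact norm_add_le _ _
        · simpa only [add_zero] using hw.add hw'

      have hneg : ∀ {x : Q}, x ∈ C → -x ∈ C := by
        rintro x ⟨w, rfl, hw⟩
        refine ⟨-w, map_neg π w, ?_⟩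
        have : ∀ j, ‖((-w : L) : ∀ _ : ℕ, A) (φ j)‖ = ‖(w : ∀ _ : ℕ, A) (φ j)‖ := by
          intro j
          rw [congrFun (lp.coeFn_neg w) (φ j)]
          exact norm_neg _
        simpa [this] using hw
      set J : TwoSidedIdeal Q := TwoSidedIdeal.mk' C hzero hadd hneg hmul_left hmul_right
        with hJ
      have hbC : b ∈ C := ⟨u, hu, htend⟩
      have hsub : ((TwoSidedIdeal.span {b} : TwoSidedIdeal Q) : Set Q) ⊆ C := by
        intro x hx
        rw [SetLike.mem_coe] at hx
        have := TwoSidedIdeal.mem_span_iff.mp hx J (by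
          intro y hy
          rw [Set.mem_singleton_iff] at hy
          subst hy
          rw [SetLike.mem_coe, hJ, TwoSidedIdeal.mem_mk']
          exact hbC)
        rwa [hJ, TwoSidedIdeal.mem_mk'] at this
      have h1cl : (1 : Q) ∈ closure C := by
        have h1 : (1 : Q) ∈ closure ((TwoSidedIdeal.span {b} : TwoSidedIdeal Q) : Set Q) := by
          rw [hfull]; trivial
        exact closure_mono hsub h1
      obtain ⟨q, hqC, hq⟩ := Metric.mem_closure_iff.mp h1cl (1/2) (by norm_num)
      have hqnorm : ‖1 - q‖ < 1 := by
        rw [dist_eq_norm] at hq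
        linarith
      -- q is invertible
      have hunit : ∃ q' : Q, q' * q = 1 := by
        refine ⟨((Units.oneSub (1 - q) hqnorm)⁻¹ : Qˣ), ?_⟩
        have h := Units.inv_mul (Units.oneSub (1 - q) hqnorm)
        rw [show ((Units.oneSub (1 - q) hqnorm : Qˣ) : Q) = q by simp [Units.oneSub]] at h
        exact h
      obtain ⟨q', hq'⟩ := hunit
      obtain ⟨w, hw, hwt⟩ := hqC
      obtain ⟨v, hv⟩ := hsurj q'
      have hker1 : π (v * w - 1) = 0 := by
        rw [map_sub, map_mul, hv, hw, hq', map_one, sub_self]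
      have ht1 : Tendsto (fun n => ‖((v * w - 1 : L) : ∀ _ : ℕ, A) n‖) atTop (nhds 0) :=
        (hker _).mp hker1
      have ht1' : Tendsto (fun j => ‖((v * w - 1 : L) : ∀ _ : ℕ, A) (φ j)‖) atTop (nhds 0) :=
        ht1.comp hφmono.tendsto_atTop
      have ht2 : Tendsto (fun j => ‖((v * w : L) : ∀ _ : ℕ, A) (φ j)‖) atTop (nhds 0) := by
        apply squeeze_zero (fun j => norm_nonneg _)
          (g := fun j => ‖v‖ * ‖(w : ∀ _ : ℕ, A) (φ j)‖)
        · intro j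
          rw [congrFun (lp.infty_coeFn_mul v w) (φ j)]
          exact (norm_mul_le _ _).trans
            (mul_le_mul_of_nonneg_right (lp.norm_apply_le_norm ENNReal.top_ne_zero v (φ j))
              (norm_nonneg _))
        · simpa using hwt.const_mul ‖v‖
      have hsum : Tendsto (fun j => ‖((v * w - 1 : L) : ∀ _ : ℕ, A) (φ j)‖
          + ‖((v * w : L) : ∀ _ : ℕ, A) (φ j)‖) atTop (nhds 0) := by
        simpa using ht1'.add ht2
      have hbound : ∀ j, (1:ℝ) ≤ ‖((v * w - 1 : L) : ∀ _ : ℕ, A) (φ j)‖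
          + ‖((v * w : L) : ∀ _ : ℕ, A) (φ j)‖ := by
        intro j
        have hco : ((v * w - 1 : L) : ∀ _ : ℕ, A) (φ j)
            = ((v * w : L) : ∀ _ : ℕ, A) (φ j) - 1 := by
          rw [congrFun (lp.coeFn_sub (v * w) 1) (φ j)]
          rfl
        calc (1:ℝ) = ‖(1 : A)‖ := CStarRing.norm_one.symm
          _ = ‖((v * w : L) : ∀ _ : ℕ, A) (φ j) - (((v * w : L) : ∀ _ : ℕ, A) (φ j) - 1)‖ := by
              congr 1; abel
          _ ≤ ‖((v * w : L) : ∀ _ : ℕ, A) (φ j)‖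
              + ‖((v * w : L) : ∀ _ : ℕ, A) (φ j) - 1‖ := norm_sub_le _ _
          _ = ‖((v * w - 1 : L) : ∀ _ : ℕ, A) (φ j)‖
              + ‖((v * w : L) : ∀ _ : ℕ, A) (φ j)‖ := by rw [hco]; ring
      obtain ⟨j, hj⟩ := (hsum.eventually (eventually_lt_nhds (by norm_num : (0:ℝ) < 1))).exists
      exact absurd (hbound j) (not_le.mpr hj)
    obtain ⟨ε, hε, N, hN⟩ := hev
    obtain ⟨m, hm⟩ := exists_nat_gt (1 / ε)
    have hm0 : 0 < m := by
      have h1 : (0:ℝ) < 1 / ε := by positivity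
      exact_mod_cast h1.trans hm
    have hmε : ∀ n, N ≤ n → 1 / (m:ℝ) ≤ ‖(u : ∀ _ : ℕ, A) n‖ := by
      intro n hn
      refine le_trans ?_ (hN n hn)
      rw [div_le_iff₀ (by exact_mod_cast hm0)]
      rw [div_lt_iff₀ hε] at hm
      nlinarith
    have hz : ∀ n : ℕ, ∃ z : A, star z * (u : ∀ _ : ℕ, A) n * z
        = (if N ≤ n then (1:A) else 0) ∧ ‖z‖ ≤ Real.sqrt (m + 1) := by
      intro n
      by_cases h : N ≤ n
      · rw [if_pos h]
        exact claimB hA.1 (hupos n) hm0 (hmε n h)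
      · rw [if_neg h]
        exact ⟨0, by simp, by simp [Real.sqrt_nonneg]⟩
    choose z hz1 hz2 using hz
    set zl : L := ⟨z, memℓp_infty ⟨Real.sqrt (m + 1), by rintro - ⟨n, rfl⟩; exact hz2 n⟩⟩
      with hzl
    have hcoord : ∀ n, ((star zl * u * zl : L) : ∀ _ : ℕ, A) n
        = (if N ≤ n then (1:A) else 0) := by
      intro n
      rw [congrFun (lp.infty_coeFn_mul (star zl * u) zl) n, Pi.mul_apply,
        congrFun (lp.infty_coeFn_mul (star zl) u) n, Pi.mul_apply, lp.star_apply]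
      exact hz1 n
    have hπ1 : π (star zl * u * zl) = 1 := by
      have h0 : π (star zl * u * zl - 1) = 0 := by
        rw [hker]
        apply Tendsto.congr' (f₁ := fun _ => (0:ℝ))
        · rw [Filter.eventuallyEq_iff_exists_mem]
          refine ⟨{n | N ≤ n}, Filter.mem_atTop N, fun n hn => ?_⟩
          show (0:ℝ) = ‖((star zl * u * zl - 1 : L) : ∀ _ : ℕ, A) n‖
          have hn' : N ≤ n := hn
          rw [congrFun (lp.coeFn_sub (star zl * u * zl) 1) n, Pi.sub_apply, hcoord n,
            if_pos hn']
          simp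
        · exact tendsto_const_nhds
      exact sub_eq_zero.mp (by rwa [map_sub, map_one] at h0)
    exact ⟨π zl, by rw [← hu, ← map_star, ← map_mul, ← map_mul, hπ1]⟩
  · -- property (P2)
    obtain ⟨v₁, v₂, h1, h2, h3⟩ := claimC hA.1 hA.2
    refine ⟨π (lconst v₁), π (lconst v₂), ?_, ?_, ?_⟩
    · rw [← map_star, ← map_mul, ← lconst_star, ← lconst_mul, h1, lconst_one, map_one]
    · rw [← map_star, ← map_mul, ← lconst_star, ← lconst_mul, h2, lconst_one, map_one]
    · rw [← map_star, ← map_star, ← map_mul, ← map_mul, ← map_mul,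
        ← lconst_star, ← lconst_star, ← lconst_mul, ← lconst_mul, ← lconst_mul,
        h3, lconst_zero, map_zero]

end Main
end
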